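/- arXiv:2006.14677 — 3 statements merged into one kernel-verified Lean document; each statement's English description precedes it below -/
import Mathlib

section
/- Let H be n hyperplanes in ℝ^d in d'-relaxed general position and N = span of the normals (dim N = d'). Then the induced arrangement Ĥ = {h ∩ N : h ∈ H} of n hyperplanes in the d'-dimensional space N is in d'-relaxed general position (i.e., in general position within N): every k ≤ d' of the induced hyperplanes intersect in a flat of dimension d' − k, and any more than d' of them have empty intersection. -/
open scoped RealInnerProductSpace Pointwise

noncomputable section

/-- The hyperplane in `ℝ^d` with normal vector `η` and bias `b`. -/
def Hyp {d : ℕ} (η : EuclideanSpace ℝ (Fin d)) (b : ℝ) : Set (EuclideanSpace ℝ (Fin d)) :=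
  {z | ⟪η, z⟫ + b = 0}

/-- `A` is an affine flat of dimension `m`: a coset of an `m`-dimensional subspace. -/
def IsFlatOfDim {d : ℕ} (A : Set (EuclideanSpace ℝ (Fin d))) (m : ℕ) : Prop :=
  ∃ (v : EuclideanSpace ℝ (Fin d)) (S : Submodule ℝ (EuclideanSpace ℝ (Fin d))),
    Module.finrank ℝ S = m ∧ A = v +ᵥ (S : Set (EuclideanSpace ℝ (Fin d)))

/-- The arrangement of the `n` hyperplanes `⟪η i, z⟫ + b i = 0` in `ℝ^d` is in
`d'`-relaxed general position: every nonempty subset of `k ≤ d'` of the hyperplanes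
intersects in a nonempty affine flat of dimension `d - k`, and every subset of more
than `d'` hyperplanes has empty intersection. -/
def RelaxedGeneralPosition {d n : ℕ} (d' : ℕ) (η : Fin n → EuclideanSpace ℝ (Fin d))
    (b : Fin n → ℝ) : Prop :=
  (∀ i, η i ≠ 0) ∧
  (∀ T : Finset (Fin n), T.Nonempty → T.card ≤ d' →
    IsFlatOfDim (⋂ i ∈ T, Hyp (η i) (b i)) (d - T.card)) ∧
  (∀ T : Finset (Fin n), d' < T.card → (⋂ i ∈ T, Hyp (η i) (b i)) = ∅)

lemma mem_orthogonal_span_iff {d : ℕ} (s : Set (EuclideanSpace ℝ (Fin d)))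
    (w : EuclideanSpace ℝ (Fin d)) :
    w ∈ (Submodule.span ℝ s)ᗮ ↔ ∀ v ∈ s, ⟪v, w⟫ = 0 := by
  constructor
  · intro h v hv
    exact h v (Submodule.subset_span hv)
  · intro h v hv
    induction hv using Submodule.span_induction with
    | mem x hx => exact h x hx
    | zero => simp
    | add x y _ _ hx hy => simp [inner_add_left, hx, hy]
    | smul a x _ hx => simp [inner_smul_left, hx]

lemma inter_eq_vadd {d n : ℕ} (η : Fin n → EuclideanSpace ℝ (Fin d)) (b : Fin n → ℝ)
    (T : Finset (Fin n)) (x : EuclideanSpace ℝ (Fin d))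
    (hx : x ∈ ⋂ i ∈ T, Hyp (η i) (b i)) :
    (⋂ i ∈ T, Hyp (η i) (b i)) =
      x +ᵥ ((Submodule.span ℝ (η '' T))ᗮ : Set (EuclideanSpace ℝ (Fin d))) := by
  simp only [Set.mem_iInter, Hyp, Set.mem_setOf_eq] at hx
  ext z
  simp only [Set.mem_iInter, Hyp, Set.mem_setOf_eq, Set.mem_vadd_set_iff_neg_vadd_mem,
    SetLike.mem_coe, mem_orthogonal_span_iff]
  constructor
  · intro h v hv
    obtain ⟨i, hi, rfl⟩ := hv
    have h1 := h i hi
    have h2 := hx i hi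
    simp only [vadd_eq_add, inner_add_right, inner_neg_right]
    linarith
  · intro h i hi
    have h1 := h (η i) ⟨i, hi, rfl⟩
    simp only [vadd_eq_add, inner_add_right, inner_neg_right] at h1
    have h2 := hx i hi
    linarith

lemma finrank_span_inter {d n d' : ℕ}
    (η : Fin n → EuclideanSpace ℝ (Fin d)) (b : Fin n → ℝ)
    (hH : RelaxedGeneralPosition d' η b) (hd : d' ≤ d)
    (T : Finset (Fin n)) (hT : T.Nonempty) (hTc : T.card ≤ d') :
    (⋂ i ∈ T, Hyp (η i) (b i)).Nonempty ∧
    Module.finrank ℝ (Submodule.span ℝ (η '' T)) = T.card := by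
  obtain ⟨v, W, hW, hA⟩ := hH.2.1 T hT hTc
  have hv : v ∈ ⋂ i ∈ T, Hyp (η i) (b i) := by
    rw [hA, Set.mem_vadd_set]
    exact ⟨0, W.zero_mem, by simp⟩
  refine ⟨⟨v, hv⟩, ?_⟩
  set S := Submodule.span ℝ (η '' ↑T) with hS
  have h2 := inter_eq_vadd η b T v hv
  rw [hA] at h2
  have hWS : W = Sᗮ := by
    apply SetLike.coe_injective
    ext z
    constructor
    · intro hz
      have h3 : v +ᵥ z ∈ v +ᵥ (W : Set (EuclideanSpace ℝ (Fin d))) :=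
        Set.vadd_mem_vadd_set_iff.2 hz
      rw [h2] at h3
      exact Set.vadd_mem_vadd_set_iff.1 h3
    · intro hz
      have h3 : v +ᵥ z ∈ v +ᵥ ((Sᗮ : Submodule ℝ _) : Set (EuclideanSpace ℝ (Fin d))) :=
        Set.vadd_mem_vadd_set_iff.2 hz
      rw [← h2] at h3
      exact Set.vadd_mem_vadd_set_iff.1 h3
  have horth : Module.finrank ℝ S + Module.finrank ℝ Sᗮ = d := by
    have h4 := Submodule.finrank_add_finrank_orthogonal S
    simpa [finrank_euclideanSpace_fin] using h4
  rw [← hWS, hW] at horth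
  have hTd : T.card ≤ d := hTc.trans hd
  omega

/-- If `H` is in `d'`-relaxed general position in `ℝ^d` and `N` is the span of the
normals, then the induced arrangement `{h ∩ N : h ∈ H}` in the `d'`-dimensional space
`N` is in general position within `N`: every nonempty collection of `k ≤ d'` induced
hyperplanes intersects in a flat of dimension `d' - k`, and any more than `d'` of them
have empty intersection. -/
theorem induced_arrangement_general_position {d n d' : ℕ} (hd : d' ≤ d) (hn : d' ≤ n)
    (η : Fin n → EuclideanSpace ℝ (Fin d)) (b : Fin n → ℝ)
    (hH : RelaxedGeneralPosition d' η b)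
    (N : Submodule ℝ (EuclideanSpace ℝ (Fin d)))
    (hN : N = Submodule.span ℝ (Set.range η)) :
    (∀ T : Finset (Fin n), T.Nonempty → T.card ≤ d' →
      IsFlatOfDim ((⋂ i ∈ T, Hyp (η i) (b i)) ∩ (N : Set (EuclideanSpace ℝ (Fin d))))
        (d' - T.card)) ∧
    (∀ T : Finset (Fin n), d' < T.card →
      (⋂ i ∈ T, Hyp (η i) (b i)) ∩ (N : Set (EuclideanSpace ℝ (Fin d))) = ∅) := by
  constructor
  · intro T hT hTc
    obtain ⟨hAne, hSk⟩ := finrank_span_inter η b hH hd T hT hTc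
    have hd'pos : 1 ≤ d' := le_trans (Finset.card_pos.2 hT) hTc
    -- a finset of size d'
    obtain ⟨T₀, -, hT₀card⟩ :=
      Finset.exists_subset_card_eq (s := (Finset.univ : Finset (Fin n))) (n := d')
        (by simpa using hn)
    have hT₀ne : T₀.Nonempty := Finset.card_pos.1 (by omega)
    obtain ⟨hA₀ne, hS₀⟩ := finrank_span_inter η b hH hd T₀ hT₀ne (le_of_eq hT₀card)
    rw [hT₀card] at hS₀
    set S₀ := Submodule.span ℝ (η '' ↑T₀) with hS₀def
    have hS₀le : S₀ ≤ N := by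
      rw [hN]
      exact Submodule.span_mono (Set.image_subset_range η ↑T₀)
    have hNge : d' ≤ Module.finrank ℝ N := hS₀ ▸ Submodule.finrank_mono hS₀le
    -- upper bound
    have hNle : Module.finrank ℝ N ≤ d' := by
      by_contra hlt
      push_neg at hlt
      have hj : ∃ j, η j ∉ S₀ := by
        by_contra hall
        push_neg at hall
        have : N ≤ S₀ := by
          rw [hN]
          exact Submodule.span_le.2 (Set.range_subset_iff.2 hall)
        have := Submodule.finrank_mono this
        omega
      obtain ⟨j, hj⟩ := hj
      obtain ⟨x₀, hx₀⟩ := hA₀ne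
      have hj' : η j ∉ S₀ᗮᗮ := by rwa [Submodule.orthogonal_orthogonal]
      rw [Submodule.mem_orthogonal] at hj'
      push_neg at hj'
      obtain ⟨w, hw, hwj⟩ := hj'
      have hjT₀ : j ∉ T₀ := fun hmem =>
        hj (Submodule.subset_span ⟨j, hmem, rfl⟩)
      set t : ℝ := (-(b j) - ⟪η j, x₀⟫) / ⟪w, η j⟫ with ht
      set z : EuclideanSpace ℝ (Fin d) := x₀ + t • w with hz
      have hz₀ : z ∈ ⋂ i ∈ T₀, Hyp (η i) (b i) := by
        rw [inter_eq_vadd η b T₀ x₀ hx₀, Set.mem_vadd_set]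
        exact ⟨t • w, Submodule.smul_mem _ t hw, by simp [hz]⟩
      have hzj : z ∈ Hyp (η j) (b j) := by
        simp only [Hyp, Set.mem_setOf_eq, hz, inner_add_right, inner_smul_right]
        have hc : (⟪η j, w⟫ : ℝ) = ⟪w, η j⟫ := real_inner_comm _ _
        rw [hc, ht, div_mul_cancel₀ _ hwj]
        ring
      have hins : z ∈ ⋂ i ∈ insert j T₀, Hyp (η i) (b i) := by
        simp only [Set.mem_iInter, Finset.mem_insert] at *
        rintro i (rfl | hi)
        · exact hzj
        · exact hz₀ i hi
      have hempty := hH.2.2 (insert j T₀) (by rw [Finset.card_insert_of_notMem hjT₀]; omega)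
      rw [hempty] at hins
      exact hins
    have hNd' : Module.finrank ℝ N = d' := le_antisymm hNle hNge
    -- main construction
    obtain ⟨x, hx⟩ := hAne
    set S := Submodule.span ℝ (η '' ↑T) with hSdef
    have hSle : S ≤ N := by
      rw [hN]; exact Submodule.span_mono (Set.image_subset_range η ↑T)
    set p : EuclideanSpace ℝ (Fin d) := (N.orthogonalProjectionOnto x : EuclideanSpace ℝ (Fin d))
      with hpdef
    have hpN : p ∈ N := (N.orthogonalProjectionOnto x).2
    have hxp : x - p ∈ Nᗮ := Submodule.sub_starProjection_mem_orthogonal (K := N) x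
    have hp : p ∈ ⋂ i ∈ T, Hyp (η i) (b i) := by
      simp only [Set.mem_iInter, Hyp, Set.mem_setOf_eq] at hx ⊢
      intro i hi
      have hηN : η i ∈ N := by
        rw [hN]; exact Submodule.subset_span ⟨i, rfl⟩
      have h0 : ⟪η i, x - p⟫ = 0 := hxp (η i) hηN
      rw [inner_sub_right] at h0
      have := hx i hi
      linarith
    refine ⟨p, Sᗮ ⊓ N, ?_, ?_⟩
    · have h5 := Submodule.finrank_add_inf_finrank_orthogonal hSle
      rw [hSk, hNd'] at h5
      omega
    · rw [inter_eq_vadd η b T p hp]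
      ext z
      simp only [Set.mem_inter_iff, Set.mem_vadd_set_iff_neg_vadd_mem, SetLike.mem_coe,
        Submodule.mem_inf]
      constructor
      · rintro ⟨h1, h2⟩
        exact ⟨h1, by simpa using N.add_mem (N.neg_mem hpN) h2⟩
      · rintro ⟨h1, h2⟩
        refine ⟨h1, ?_⟩
        have := N.add_mem hpN h2
        simpa [vadd_eq_add] using this
  · intro T hTc
    rw [hH.2.2 T hTc]
    simp
end
end

section
/- Let H be n hyperplanes in ℝ^d in d'-relaxed general position and N the span of the normals. For any subset S_k ⊆ H of size 1 ≤ k ≤ d', the flat (⋂_{h∈S_k} h) ∩ N has dimension d' − k. -/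
open scoped RealInnerProductSpace Pointwise

noncomputable section

-- membership in orthogonal of a span
lemma mem_orth_span_iff {d : ℕ} (s : Set (EuclideanSpace ℝ (Fin d)))
    (v : EuclideanSpace ℝ (Fin d)) :
    v ∈ (Submodule.span ℝ s)ᗮ ↔ ∀ u ∈ s, ⟪u, v⟫ = 0 := by
  rw [Submodule.mem_orthogonal]
  constructor
  · exact fun h u hu => h u (Submodule.subset_span hu)
  · intro h u hu
    induction hu using Submodule.span_induction with
    | mem x hx => exact h x hx
    | zero => simp
    | add x y _ _ hx hy => rw [inner_add_left, hx, hy, add_zero]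
    | smul a x _ hx => rw [inner_smul_left, hx, mul_zero]

-- the intersection of hyperplanes through x equals x + orthogonal of span of normals
lemma inter_hyp_eq {d n : ℕ} (η : Fin n → EuclideanSpace ℝ (Fin d)) (b : Fin n → ℝ)
    (T : Finset (Fin n)) (x : EuclideanSpace ℝ (Fin d))
    (hx : x ∈ ⋂ i ∈ T, Hyp (η i) (b i)) :
    (⋂ i ∈ T, Hyp (η i) (b i))
      = x +ᵥ (((Submodule.span ℝ (η '' T))ᗮ : Submodule ℝ _) : Set _) := by
  simp only [Set.mem_iInter] at hx
  ext z
  rw [Set.mem_vadd_set_iff_neg_vadd_mem, vadd_eq_add]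
  simp only [Set.mem_iInter, SetLike.mem_coe, mem_orth_span_iff]
  constructor
  · intro h u hu
    obtain ⟨i, hi, rfl⟩ := hu
    have h1 := h i hi
    have h2 := hx i hi
    simp only [Hyp, Set.mem_setOf_eq] at h1 h2
    have : ⟪η i, -x + z⟫ = ⟪η i, z⟫ - ⟪η i, x⟫ := by
      rw [inner_add_right, inner_neg_right]; ring
    rw [this]; linarith
  · intro h i hi
    have h1 := h (η i) ⟨i, hi, rfl⟩
    have h2 := hx i hi
    simp only [Hyp, Set.mem_setOf_eq] at h2 ⊢
    have : ⟪η i, -x + z⟫ = ⟪η i, z⟫ - ⟪η i, x⟫ := by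
      rw [inner_add_right, inner_neg_right]; ring
    rw [this] at h1; linarith

-- translation uniqueness
lemma vadd_eq_vadd_sub {d : ℕ} (v x : EuclideanSpace ℝ (Fin d))
    (S W : Submodule ℝ (EuclideanSpace ℝ (Fin d)))
    (h : v +ᵥ (S : Set (EuclideanSpace ℝ (Fin d))) = x +ᵥ (W : Set (EuclideanSpace ℝ (Fin d)))) : S = W := by
  have hx : x ∈ v +ᵥ (S : Set (EuclideanSpace ℝ (Fin d))) := by
    rw [h, Set.mem_vadd_set_iff_neg_vadd_mem, vadd_eq_add]
    simpa using W.zero_mem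
  rw [Set.mem_vadd_set_iff_neg_vadd_mem, vadd_eq_add] at hx
  ext w
  constructor
  · intro hw
    have : v + w ∈ x +ᵥ (W : Set (EuclideanSpace ℝ (Fin d))) := by
      rw [← h, Set.mem_vadd_set_iff_neg_vadd_mem, vadd_eq_add]; simpa using hw
    rw [Set.mem_vadd_set_iff_neg_vadd_mem, vadd_eq_add] at this
    have hv : -x + v ∈ W := by
      have : v ∈ x +ᵥ (W : Set (EuclideanSpace ℝ (Fin d))) := by
        rw [← h, Set.mem_vadd_set_iff_neg_vadd_mem, vadd_eq_add]
        simpa using S.zero_mem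
      rwa [Set.mem_vadd_set_iff_neg_vadd_mem, vadd_eq_add] at this
    have h2 : (-x + (v + w)) + -(-x + v) ∈ W := W.add_mem this (W.neg_mem hv)
    have : (-x + (v + w)) + -(-x + v) = w := by abel
    rwa [this] at h2
  · intro hw
    have : x + w ∈ v +ᵥ (S : Set (EuclideanSpace ℝ (Fin d))) := by
      rw [h, Set.mem_vadd_set_iff_neg_vadd_mem, vadd_eq_add]; simpa using hw
    rw [Set.mem_vadd_set_iff_neg_vadd_mem, vadd_eq_add] at this
    have h2 : (-v + (x + w)) + -(-v + x) ∈ S := S.add_mem this (S.neg_mem hx)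
    have : (-v + (x + w)) + -(-v + x) = w := by abel
    rwa [this] at h2

lemma flat_mem {d : ℕ} {A : Set (EuclideanSpace ℝ (Fin d))} {m : ℕ}
    (h : IsFlatOfDim A m) : ∃ x, x ∈ A := by
  obtain ⟨v, S, _, hA⟩ := h
  exact ⟨v, by rw [hA, Set.mem_vadd_set_iff_neg_vadd_mem, vadd_eq_add]; simpa using S.zero_mem⟩

-- the orthogonal complement of the span of the normals indexed by T has rank d - |T|
lemma finrank_orth {d n d' : ℕ} {η : Fin n → EuclideanSpace ℝ (Fin d)} {b : Fin n → ℝ}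
    (hH : RelaxedGeneralPosition d' η b) (T : Finset (Fin n)) (hT : T.Nonempty)
    (hTc : T.card ≤ d') :
    Module.finrank ℝ ((Submodule.span ℝ (η '' T))ᗮ) = d - T.card := by
  obtain ⟨v, S, hS, hA⟩ := hH.2.1 T hT hTc
  have hv : v ∈ ⋂ i ∈ T, Hyp (η i) (b i) := by
    rw [hA, Set.mem_vadd_set_iff_neg_vadd_mem, vadd_eq_add]; simpa using S.zero_mem
  have heq := inter_hyp_eq η b T v hv
  rw [hA] at heq
  rw [← vadd_eq_vadd_sub v v S _ heq, hS]

lemma finrank_span_T {d n d' : ℕ} {η : Fin n → EuclideanSpace ℝ (Fin d)} {b : Fin n → ℝ}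
    (hd : d' ≤ d) (hH : RelaxedGeneralPosition d' η b) (T : Finset (Fin n)) (hT : T.Nonempty)
    (hTc : T.card ≤ d') :
    Module.finrank ℝ (Submodule.span ℝ (η '' T)) = T.card := by
  have h1 := Submodule.finrank_add_finrank_orthogonal (K := Submodule.span ℝ (η '' ↑T))
  rw [finrank_orth hH T hT hTc, finrank_euclideanSpace_fin] at h1
  omega

-- the span of all the normals has rank d'
lemma finrank_span_range {d n d' : ℕ} {η : Fin n → EuclideanSpace ℝ (Fin d)} {b : Fin n → ℝ}
    (hd : d' ≤ d) (hn : d' ≤ n) (hd1 : 1 ≤ d') (hH : RelaxedGeneralPosition d' η b) :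
    Module.finrank ℝ (Submodule.span ℝ (Set.range η)) = d' := by
  obtain ⟨T₀, -, hT₀c⟩ := Finset.exists_subset_card_eq (s := (Finset.univ : Finset (Fin n)))
    (n := d') (by simpa using hn)
  have hT₀ : T₀.Nonempty := Finset.card_pos.mp (by omega)
  set M : Submodule ℝ (EuclideanSpace ℝ (Fin d)) := Submodule.span ℝ (η '' T₀) with hM
  have hMrank : Module.finrank ℝ M = d' := by
    rw [hM, finrank_span_T hd hH T₀ hT₀ (le_of_eq hT₀c), hT₀c]
  have hspan : Submodule.span ℝ (Set.range η) = M := by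
    apply le_antisymm
    · rw [Submodule.span_le]
      rintro - ⟨j, rfl⟩
      by_contra hj
      have hjT : j ∉ T₀ := fun h => hj (Submodule.subset_span ⟨j, h, rfl⟩)
      -- construct a point in the intersection over insert j T₀, contradicting emptiness
      obtain ⟨x, hx⟩ := flat_mem (hH.2.1 T₀ hT₀ (le_of_eq hT₀c))
      set q : EuclideanSpace ℝ (Fin d) := η j - (M.orthogonalProjectionOnto (η j) : _) with hq
      have hqM : q ∈ Mᗮ := Submodule.sub_starProjection_mem_orthogonal (K := M) (η j)
      have hq0 : q ≠ 0 := by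
        intro h0
        apply hj
        have : η j = (M.orthogonalProjectionOnto (η j) : EuclideanSpace ℝ (Fin d)) := by
          have := sub_eq_zero.mp (hq ▸ h0)
          exact this
        rw [this]; exact (M.orthogonalProjectionOnto (η j)).2
      have hnq : ⟪η j, q⟫ = ‖q‖ ^ 2 := by
        have hproj : (M.orthogonalProjectionOnto (η j) : EuclideanSpace ℝ (Fin d)) ∈ M :=
          (M.orthogonalProjectionOnto (η j)).2
        have hdecomp : η j = (M.orthogonalProjectionOnto (η j) : EuclideanSpace ℝ (Fin d)) + q := by
          rw [hq]; abel
        rw [hdecomp, inner_add_left, Submodule.inner_right_of_mem_orthogonal hproj hqM,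
          real_inner_self_eq_norm_sq, zero_add]
      have hq2 : ‖q‖ ^ 2 ≠ 0 := pow_ne_zero 2 (norm_ne_zero_iff.mpr hq0)
      set c : ℝ := -(⟪η j, x⟫ + b j) / ‖q‖ ^ 2 with hc
      set z : EuclideanSpace ℝ (Fin d) := x + c • q with hz
      have hzmem : z ∈ ⋂ i ∈ insert j T₀, Hyp (η i) (b i) := by
        simp only [Set.mem_iInter, Finset.mem_insert]
        rintro i (rfl | hi)
        · show ⟪η i, z⟫ + b i = 0
          rw [hz, inner_add_right, real_inner_smul_right, hnq, hc]
          field_simp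
          ring
        · show ⟪η i, z⟫ + b i = 0
          have hiM : η i ∈ M := Submodule.subset_span ⟨i, hi, rfl⟩
          have : ⟪η i, q⟫ = 0 := Submodule.inner_right_of_mem_orthogonal hiM hqM
          rw [hz, inner_add_right, real_inner_smul_right, this, mul_zero, add_zero]
          simp only [Set.mem_iInter] at hx
          exact hx i hi
      have hempty := hH.2.2 (insert j T₀) (by rw [Finset.card_insert_of_notMem hjT]; omega)
      rw [hempty] at hzmem
      exact hzmem
    · exact Submodule.span_mono (by rintro - ⟨i, -, rfl⟩; exact ⟨i, rfl⟩)
  rw [hspan, hMrank]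


/-- For an arrangement in `d'`-relaxed general position with `N` the span of the
normals, the intersection of any `1 ≤ k ≤ d'` of the hyperplanes, intersected with `N`,
is an affine flat of dimension `d' - k`. -/
theorem dim_inter_with_span {d n d' : ℕ} (hd : d' ≤ d) (hn : d' ≤ n)
    (η : Fin n → EuclideanSpace ℝ (Fin d)) (b : Fin n → ℝ)
    (hH : RelaxedGeneralPosition d' η b)
    (N : Submodule ℝ (EuclideanSpace ℝ (Fin d)))
    (hN : N = Submodule.span ℝ (Set.range η))
    (T : Finset (Fin n)) (hT : T.Nonempty) (hTcard : T.card ≤ d') :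
    IsFlatOfDim ((⋂ i ∈ T, Hyp (η i) (b i)) ∩ (N : Set (EuclideanSpace ℝ (Fin d))))
      (d' - T.card) := by
  have hd1 : 1 ≤ d' := le_trans (Finset.card_pos.mpr hT) hTcard
  set M : Submodule ℝ (EuclideanSpace ℝ (Fin d)) := Submodule.span ℝ (η '' T) with hM
  set W : Submodule ℝ (EuclideanSpace ℝ (Fin d)) := Mᗮ with hW
  have hWrank : Module.finrank ℝ W = d - T.card := finrank_orth hH T hT hTcard
  have hNrank : Module.finrank ℝ N = d' := by
    rw [hN]; exact finrank_span_range hd hn hd1 hH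
  have hMN : M ≤ N := by
    rw [hM, hN]
    exact Submodule.span_mono (by rintro - ⟨i, -, rfl⟩; exact ⟨i, rfl⟩)
  obtain ⟨x, hx⟩ := flat_mem (hH.2.1 T hT hTcard)
  have hF : (⋂ i ∈ T, Hyp (η i) (b i)) = x +ᵥ (W : Set (EuclideanSpace ℝ (Fin d))) :=
    inter_hyp_eq η b T x hx
  set p : EuclideanSpace ℝ (Fin d) := (↑(N.orthogonalProjectionOnto x) : EuclideanSpace ℝ (Fin d)) with hp
  have hpN : p ∈ N := (N.orthogonalProjectionOnto x).2
  have hxp : x - p ∈ W := by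
    have h1 : x - p ∈ Nᗮ := Submodule.sub_starProjection_mem_orthogonal (K := N) x
    exact Submodule.orthogonal_le hMN h1
  -- the intersection with N
  have hkey : (⋂ i ∈ T, Hyp (η i) (b i)) ∩ (N : Set (EuclideanSpace ℝ (Fin d)))
      = p +ᵥ ((W ⊓ N : Submodule ℝ (EuclideanSpace ℝ (Fin d))) : Set (EuclideanSpace ℝ (Fin d))) := by
    ext z
    rw [hF]
    simp only [Set.mem_inter_iff, Set.mem_vadd_set_iff_neg_vadd_mem, vadd_eq_add,
      SetLike.mem_coe, Submodule.mem_inf]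
    constructor
    · rintro ⟨hzW, hzN⟩
      refine ⟨?_, ?_⟩
      · have := W.add_mem hzW hxp
        have he : (-x + z) + (x - p) = -p + z := by abel
        rwa [he] at this
      · have := N.sub_mem hzN hpN
        have he : z - p = -p + z := by abel
        rwa [he] at this
    · rintro ⟨hzW, hzN⟩
      refine ⟨?_, ?_⟩
      · have := W.sub_mem hzW hxp
        have he : (-p + z) - (x - p) = -x + z := by abel
        rwa [he] at this
      · have := N.add_mem hzN hpN
        have he : (-p + z) + p = z := by abel
        rwa [he] at this
  refine ⟨p, W ⊓ N, ?_, hkey⟩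
  have hsup : W ⊔ N = ⊤ := by
    rw [eq_top_iff]
    calc (⊤ : Submodule ℝ (EuclideanSpace ℝ (Fin d)))
        = M ⊔ Mᗮ := (Submodule.sup_orthogonal_of_hasOrthogonalProjection).symm
      _ ≤ N ⊔ W := sup_le_sup hMN le_rfl
      _ = W ⊔ N := sup_comm _ _
  have h1 := Submodule.finrank_sup_add_finrank_inf_eq W N
  rw [hsup, hWrank, hNrank, finrank_top, finrank_euclideanSpace_fin] at h1
  omega
end
end

section
/- If H is a set of n hyperplanes in ℝ^d whose arrangement is in d'-relaxed general position, then the number of regions (connected components of ℝ^d ∖ ⋃H) equals Σ_{i=0}^{d'} C(n, i). -/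
open scoped RealInnerProductSpace Pointwise

noncomputable section

namespace RGP

variable {d n : ℕ} (η : Fin n → EuclideanSpace ℝ (Fin d)) (b : Fin n → ℝ)

def fval (i : Fin n) (z : EuclideanSpace ℝ (Fin d)) : ℝ := ⟪η i, z⟫ + b i

def SC (t : Fin n → Bool) (i : Fin n) (z : EuclideanSpace ℝ (Fin d)) : Prop :=
  if t i then 0 < fval η b i z else fval η b i z < 0

def SVec (s : Finset (Fin n)) (F : Set (EuclideanSpace ℝ (Fin d))) : Set (Fin n → Bool) :=
  {t | (∀ i ∉ s, t i = false) ∧ ∃ z ∈ F, ∀ i ∈ s, SC η b t i z}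

variable {η b}

lemma mem_hyp_iff {i : Fin n} {z : EuclideanSpace ℝ (Fin d)} :
    z ∈ Hyp (η i) (b i) ↔ fval η b i z = 0 := Iff.rfl

lemma sc_ne_zero {t : Fin n → Bool} {i : Fin n} {z : EuclideanSpace ℝ (Fin d)}
    (h : SC η b t i z) : fval η b i z ≠ 0 := by
  unfold SC at h; split at h <;> [exact ne_of_gt h; exact ne_of_lt h]

lemma fval_combo (i : Fin n) (z z' : EuclideanSpace ℝ (Fin d)) (r r' : ℝ) (h : r + r' = 1) :
    fval η b i (r • z + r' • z') = r * fval η b i z + r' * fval η b i z' := by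
  simp only [fval, inner_add_right, real_inner_smul_right]
  have : r' = 1 - r := by linarith
  subst this; ring

lemma fval_line (i : Fin n) (z u : EuclideanSpace ℝ (Fin d)) (r : ℝ) :
    fval η b i (z + r • u) = fval η b i z + r * ⟪η i, u⟫ := by
  simp only [fval, inner_add_right, real_inner_smul_right]; ring

lemma mem_vadd_coset {v z : EuclideanSpace ℝ (Fin d)} {S : Submodule ℝ (EuclideanSpace ℝ (Fin d))} :
    z ∈ v +ᵥ (S : Set (EuclideanSpace ℝ (Fin d))) ↔ z - v ∈ S := by
  rw [Set.mem_vadd_set_iff_neg_vadd_mem]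
  simp [vadd_eq_add, neg_add_eq_sub]

lemma flat_nonempty {A : Set (EuclideanSpace ℝ (Fin d))} {m : ℕ} (h : IsFlatOfDim A m) :
    A.Nonempty := by
  obtain ⟨v, S, -, rfl⟩ := h
  exact ⟨v, mem_vadd_coset.2 (by simp)⟩

lemma flat_dim_unique {A : Set (EuclideanSpace ℝ (Fin d))} {m m' : ℕ}
    (h : IsFlatOfDim A m) (h' : IsFlatOfDim A m') : m = m' := by
  obtain ⟨v, S, hS, rfl⟩ := h
  obtain ⟨v', S', hS', hE⟩ := h'
  have hv : v - v' ∈ S' := by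
    rw [← mem_vadd_coset, ← hE]; exact mem_vadd_coset.2 (by simp)
  have : S = S' := by
    ext x
    have h1 : v + x ∈ v +ᵥ (S : Set (EuclideanSpace ℝ (Fin d))) ↔ x ∈ S := by
      rw [mem_vadd_coset]; simp
    have h2 : v + x ∈ v' +ᵥ (S' : Set (EuclideanSpace ℝ (Fin d))) ↔ x ∈ S' := by
      rw [mem_vadd_coset]
      constructor
      · intro h
        have := S'.sub_mem h hv
        simpa using this
      · intro h
        have := S'.add_mem hv h
        convert this using 1
        abel
    rw [← h1, hE, h2]
  rw [← hS, ← hS', this]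

end RGP

namespace RGP

variable {d n : ℕ} {η : Fin n → EuclideanSpace ℝ (Fin d)} {b : Fin n → ℝ}

lemma flat_add_mem {F : Set (EuclideanSpace ℝ (Fin d))} {v : EuclideanSpace ℝ (Fin d)}
    {S : Submodule ℝ (EuclideanSpace ℝ (Fin d))}
    (hF : F = v +ᵥ (S : Set (EuclideanSpace ℝ (Fin d))))
    {z w : EuclideanSpace ℝ (Fin d)} (hz : z ∈ F) (hw : w ∈ S) : z + w ∈ F := by
  subst hF
  rw [mem_vadd_coset] at hz ⊢
  have := S.add_mem hz hw
  convert this using 1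
  abel

lemma sub_mem_dir {F : Set (EuclideanSpace ℝ (Fin d))} {v : EuclideanSpace ℝ (Fin d)}
    {S : Submodule ℝ (EuclideanSpace ℝ (Fin d))}
    (hF : F = v +ᵥ (S : Set (EuclideanSpace ℝ (Fin d))))
    {z z' : EuclideanSpace ℝ (Fin d)} (hz : z ∈ F) (hz' : z' ∈ F) : z' - z ∈ S := by
  subst hF
  rw [mem_vadd_coset] at hz hz'
  have := S.sub_mem hz' hz
  convert this using 1
  abel

/-- Crossing lemma: an affine segment between points of opposite `j`-sign inside a flat
crosses the hyperplane at a point preserving strict signs shared by the endpoints. -/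
lemma crossing {F : Set (EuclideanSpace ℝ (Fin d))} {v : EuclideanSpace ℝ (Fin d)}
    {S : Submodule ℝ (EuclideanSpace ℝ (Fin d))}
    (hF : F = v +ᵥ (S : Set (EuclideanSpace ℝ (Fin d))))
    {j : Fin n} {z z' : EuclideanSpace ℝ (Fin d)} (hz : z ∈ F) (hz' : z' ∈ F)
    (h1 : fval η b j z < 0) (h2 : 0 < fval η b j z') :
    ∃ w ∈ F, fval η b j w = 0 ∧
      (∀ i, fval η b i z < 0 → fval η b i z' < 0 → fval η b i w < 0) ∧
      (∀ i, 0 < fval η b i z → 0 < fval η b i z' → 0 < fval η b i w) := by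
  set a := fval η b j z with ha
  set c := fval η b j z' with hc
  have hca : 0 < c - a := by linarith
  set r : ℝ := -a / (c - a) with hr
  have hr0 : 0 < r := div_pos (by linarith) hca
  have hr1 : r < 1 := by
    rw [div_lt_one hca]; linarith
  set w := z + r • (z' - z) with hw
  have hval : ∀ i, fval η b i w = (1 - r) * fval η b i z + r * fval η b i z' := by
    intro i
    have : w = (1 - r) • z + r • z' := by
      rw [hw, smul_sub]; module
    rw [this, fval_combo i z z' (1 - r) r (by ring)]
  refine ⟨w, ?_, ?_, ?_, ?_⟩
  · exact flat_add_mem hF hz (S.smul_mem r (sub_mem_dir hF hz hz'))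
  · rw [hval j, ← ha, ← hc, hr]; field_simp; ring
  · intro i hi hi'; rw [hval i]; nlinarith
  · intro i hi hi'; rw [hval i]; nlinarith

lemma fval_continuous (i : Fin n) : Continuous (fval η b i) := by
  unfold fval
  exact (continuous_const.inner continuous_id).add continuous_const

lemma sc_open (t : Fin n → Bool) (i : Fin n) : IsOpen {z | SC η b t i z} := by
  unfold SC
  split
  · exact isOpen_lt continuous_const (fval_continuous i)
  · exact isOpen_lt (fval_continuous i) continuous_const

/-- Move lemma: from a point on `H j` inside the flat with strict signs on `s'`,
we can move within the flat off `H j` to either side keeping the `s'`-signs. -/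
lemma move {F : Set (EuclideanSpace ℝ (Fin d))} {v : EuclideanSpace ℝ (Fin d)}
    {S : Submodule ℝ (EuclideanSpace ℝ (Fin d))}
    (hF : F = v +ᵥ (S : Set (EuclideanSpace ℝ (Fin d))))
    {j : Fin n} {z : EuclideanSpace ℝ (Fin d)} (hz : z ∈ F) (hz0 : fval η b j z = 0)
    {u : EuclideanSpace ℝ (Fin d)} (huS : u ∈ S) (hcu : ⟪η j, u⟫ ≠ 0)
    (s' : Finset (Fin n)) (t : Fin n → Bool) (hsc : ∀ i ∈ s', SC η b t i z) (ε : Bool) :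
    ∃ z' ∈ F, (∀ i ∈ s', SC η b t i z') ∧
      (if ε then 0 < fval η b j z' else fval η b j z' < 0) := by
  classical
  set O : Set (EuclideanSpace ℝ (Fin d)) := ⋂ i ∈ s', {w | SC η b t i w} with hO
  have hOopen : IsOpen O := isOpen_biInter_finset (fun i _ => sc_open t i)
  have hzO : z ∈ O := by
    rw [hO]; simp only [Set.mem_iInter]; exact fun i hi => hsc i hi
  have hg : Continuous (fun r : ℝ => z + r • u) :=
    continuous_const.add (continuous_id.smul continuous_const)
  have hpre : IsOpen ((fun r : ℝ => z + r • u) ⁻¹' O) := hOopen.preimage hg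
  have h0 : (0 : ℝ) ∈ (fun r : ℝ => z + r • u) ⁻¹' O := by
    simp only [Set.mem_preimage, zero_smul, add_zero]; exact hzO
  obtain ⟨δ, hδ, hball⟩ := Metric.isOpen_iff.mp hpre 0 h0
  set c := ⟪η j, u⟫ with hcdef
  set r : ℝ := (if (0 < c) = (ε = true) then δ / 2 else -(δ / 2)) with hrdef
  have hrball : r ∈ Metric.ball (0 : ℝ) δ := by
    rw [Metric.mem_ball, Real.dist_eq]
    rw [hrdef]; split
    · rw [sub_zero, abs_of_pos (by linarith)]; linarith
    · rw [sub_zero, abs_of_neg (by linarith)]; linarith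
  have hmem : z + r • u ∈ O := hball hrball
  refine ⟨z + r • u, flat_add_mem hF hz (S.smul_mem r huS), ?_, ?_⟩
  · intro i hi
    have := Set.mem_iInter.mp hmem i
    simp only [Set.mem_iInter] at this
    exact this hi
  · have hfv : fval η b j (z + r • u) = r * c := by rw [fval_line, hz0, zero_add]
    rcases hcu.lt_or_gt with hc | hc <;> cases ε <;>
      simp only [if_true, if_false, Bool.false_eq_true] <;>
      rw [hfv] <;> rw [hrdef] <;>
      · split <;> rename_i hsplit <;> simp_all <;> nlinarith

open Finset

lemma svec_finite (s : Finset (Fin n)) (F : Set (EuclideanSpace ℝ (Fin d))) :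
    (SVec η b s F).Finite := Set.toFinite _

/-- The deletion–restriction recursion for the number of sign vectors. -/
lemma step_count {F : Set (EuclideanSpace ℝ (Fin d))} {v : EuclideanSpace ℝ (Fin d)}
    {S : Submodule ℝ (EuclideanSpace ℝ (Fin d))}
    (hF : F = v +ᵥ (S : Set (EuclideanSpace ℝ (Fin d))))
    {s : Finset (Fin n)} {j : Fin n} (hj : j ∈ s)
    {u : EuclideanSpace ℝ (Fin d)} (huS : u ∈ S) (hcu : ⟪η j, u⟫ ≠ 0) :
    (SVec η b s F).ncard
      = (SVec η b (s.erase j) F).ncard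
        + (SVec η b (s.erase j) (F ∩ Hyp (η j) (b j))).ncard := by
  classical
  set s' := s.erase j with hs'
  set F' := F ∩ Hyp (η j) (b j) with hF'
  set A := SVec η b s' F with hA
  set Q := SVec η b s' F' with hQ
  set Ap := {t ∈ A | Function.update t j true ∈ SVec η b s F} with hAp
  set Am := {t ∈ A | t ∈ SVec η b s F} with hAm
  -- t j = false for members of A
  have hjs' : j ∉ s' := notMem_erase j s
  have hAfalse : ∀ t ∈ A, t j = false := fun t ht => ht.1 j hjs'
  -- Q ⊆ A
  have hQA : Q ⊆ A := by
    rintro t ⟨hsupp, z, hzF, hsc⟩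
    exact ⟨hsupp, z, hzF.1, hsc⟩
  -- Q ⊆ Ap ∩ Am
  have hQsub : Q ⊆ Ap ∩ Am := by
    rintro t ht
    have htA : t ∈ A := hQA ht
    obtain ⟨hsupp, z, ⟨hzF, hzH⟩, hsc⟩ := ht
    have hz0 : fval η b j z = 0 := hzH
    obtain ⟨zp, hzpF, hzpsc, hzpj⟩ := move hF hzF hz0 huS hcu s' t hsc true
    obtain ⟨zm, hzmF, hzmsc, hzmj⟩ := move hF hzF hz0 huS hcu s' t hsc false
    simp only [if_true, Bool.false_eq_true, if_false] at hzpj hzmj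
    constructor
    · refine ⟨htA, ?_, zp, hzpF, ?_⟩
      · intro i hi
        have hij : i ≠ j := fun h => hi (h ▸ hj)
        rw [Function.update_of_ne hij]
        exact hsupp i (fun h => hi (mem_of_mem_erase h))
      · intro i hi
        by_cases hij : i = j
        · subst hij
          unfold SC
          rw [Function.update_self]
          simpa using hzpj
        · have : SC η b t i zp := hzpsc i (mem_erase.2 ⟨hij, hi⟩)
          unfold SC at this ⊢
          rwa [Function.update_of_ne hij]
    · refine ⟨htA, ?_, zm, hzmF, ?_⟩
      · intro i hi
        exact hsupp i (fun h => hi (mem_of_mem_erase h))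
      · intro i hi
        by_cases hij : i = j
        · subst hij
          unfold SC
          rw [hAfalse t htA]
          simpa using hzmj
        · exact hzmsc i (mem_erase.2 ⟨hij, hi⟩)
  -- A = Ap ∪ Am
  have hAcover : A = Ap ∪ Am := by
    apply Set.Subset.antisymm
    · rintro t ht
      obtain ⟨hsupp, z, hzF, hsc⟩ := ht
      rcases lt_trichotomy (fval η b j z) 0 with hneg | hzero | hpos
      · right
        refine ⟨⟨hsupp, z, hzF, hsc⟩, ?_, z, hzF, ?_⟩
        · intro i hi
          exact hsupp i (fun h => hi (mem_of_mem_erase h))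
        · intro i hi
          by_cases hij : i = j
          · subst hij
            unfold SC
            rw [hsupp i hjs']
            simpa using hneg
          · exact hsc i (mem_erase.2 ⟨hij, hi⟩)
      · have : t ∈ Q := ⟨hsupp, z, ⟨hzF, hzero⟩, hsc⟩
        exact Or.inl (hQsub this).1
      · left
        refine ⟨⟨hsupp, z, hzF, hsc⟩, ?_, z, hzF, ?_⟩
        · intro i hi
          have hij : i ≠ j := fun h => hi (h ▸ hj)
          rw [Function.update_of_ne hij]
          exact hsupp i (fun h => hi (mem_of_mem_erase h))
        · intro i hi
          by_cases hij : i = j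
          · subst hij
            unfold SC
            rw [Function.update_self]
            simpa using hpos
          · have : SC η b t i z := hsc i (mem_erase.2 ⟨hij, hi⟩)
            unfold SC at this ⊢
            rwa [Function.update_of_ne hij]
    · rintro t (ht | ht) <;> exact ht.1
  -- Ap ∩ Am = Q
  have hAinter : Ap ∩ Am = Q := by
    apply Set.Subset.antisymm
    · rintro t ⟨htAp, htAm⟩
      obtain ⟨htA, -, zp, hzpF, hzpsc⟩ := htAp
      obtain ⟨⟨-, -⟩, -, zm, hzmF, hzmsc⟩ := htAm
      have hzmj : fval η b j zm < 0 := by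
        have := hzmsc j hj
        unfold SC at this
        rwa [hAfalse t htA] at this
      have hzpj : 0 < fval η b j zp := by
        have := hzpsc j hj
        unfold SC at this
        rwa [Function.update_self] at this
      obtain ⟨w, hwF, hwj, hwneg, hwpos⟩ := crossing hF hzmF hzpF hzmj hzpj
      refine ⟨htA.1, w, ⟨hwF, hwj⟩, ?_⟩
      intro i hi
      have hij : i ≠ j := fun h => hjs' (h ▸ hi)
      have hm : SC η b t i zm := hzmsc i (mem_of_mem_erase hi)
      have hp : SC η b t i zp := by
        have := hzpsc i (mem_of_mem_erase hi)
        unfold SC at this ⊢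
        rwa [Function.update_of_ne hij] at this
      unfold SC at hm hp ⊢
      by_cases hti : t i = true
      · rw [hti] at hm hp ⊢
        simp only [if_true] at hm hp ⊢
        exact hwpos i hm hp
      · rw [Bool.not_eq_true] at hti
        rw [hti] at hm hp ⊢
        simp only [Bool.false_eq_true, if_false] at hm hp ⊢
        exact hwneg i hm hp
    · exact hQsub
  -- X₀ and X₁
  set X0 := {t ∈ SVec η b s F | t j = false} with hX0
  set X1 := {t ∈ SVec η b s F | t j = true} with hX1
  have hX0Am : X0 = Am := by
    apply Set.Subset.antisymm
    · rintro t ⟨ht, htj⟩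
      refine ⟨⟨?_, ?_⟩, ht⟩
      · intro i hi
        by_cases hij : i = j
        · subst hij; exact htj
        · exact ht.1 i (fun h => hi (mem_erase.2 ⟨hij, h⟩))
      · obtain ⟨-, z, hzF, hsc⟩ := ht
        exact ⟨z, hzF, fun i hi => hsc i (mem_of_mem_erase hi)⟩
    · rintro t ⟨htA, ht⟩
      exact ⟨ht, hAfalse t htA⟩
  have hX1Ap : X1 = (fun t => Function.update t j true) '' Ap := by
    apply Set.Subset.antisymm
    · rintro t ⟨ht, htj⟩
      refine ⟨Function.update t j false, ⟨⟨?_, ?_⟩, ?_⟩, ?_⟩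
      · intro i hi
        by_cases hij : i = j
        · subst hij; simp
        · rw [Function.update_of_ne hij]
          exact ht.1 i (fun h => hi (mem_erase.2 ⟨hij, h⟩))
      · obtain ⟨-, z, hzF, hsc⟩ := ht
        refine ⟨z, hzF, fun i hi => ?_⟩
        have hij : i ≠ j := fun h => hjs' (h ▸ hi)
        have := hsc i (mem_of_mem_erase hi)
        unfold SC at this ⊢
        rwa [Function.update_of_ne hij]
      · have : Function.update (Function.update t j false) j true = t := by
          funext i
          by_cases hij : i = j
          · subst hij; simp [htj]
          · simp [Function.update_of_ne hij]
        rw [this]; exact ht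
      · funext i
        by_cases hij : i = j
        · subst hij; simp [htj]
        · simp [Function.update_of_ne hij]
    · rintro t ⟨t', ht', rfl⟩
      exact ⟨ht'.2, by simp⟩
  have hinj : Set.InjOn (fun t => Function.update t j true) Ap := by
    rintro t1 ht1 t2 ht2 heq
    funext i
    by_cases hij : i = j
    · subst hij
      rw [hAfalse t1 ht1.1, hAfalse t2 ht2.1]
    · have := congrFun heq i
      simpa [Function.update_of_ne hij] using this
  -- split SVec s F
  have hsplit : SVec η b s F = X0 ∪ X1 := by
    ext t
    constructor
    · intro ht
      rcases Bool.eq_false_or_eq_true (t j) with h | h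
      · exact Or.inr ⟨ht, h⟩
      · exact Or.inl ⟨ht, h⟩
    · rintro (⟨ht, -⟩ | ⟨ht, -⟩) <;> exact ht
  have hdisj : Disjoint X0 X1 := by
    rw [Set.disjoint_left]
    rintro t ⟨-, h0⟩ ⟨-, h1⟩
    rw [h0] at h1; exact Bool.false_ne_true h1
  calc (SVec η b s F).ncard = X0.ncard + X1.ncard := by
        rw [hsplit, Set.ncard_union_eq hdisj (Set.toFinite _) (Set.toFinite _)]
    _ = Am.ncard + Ap.ncard := by
        rw [hX0Am, hX1Ap, Set.ncard_image_of_injOn hinj]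
    _ = (Ap ∪ Am).ncard + (Ap ∩ Am).ncard := by
        rw [add_comm, ← Set.ncard_union_add_ncard_inter Ap Am (Set.toFinite _) (Set.toFinite _)]
    _ = A.ncard + Q.ncard := by rw [← hAcover, hAinter]

lemma base_empty {F : Set (EuclideanSpace ℝ (Fin d))} (hF : F.Nonempty) :
    (SVec η b (∅ : Finset (Fin n)) F).ncard = 1 := by
  have : SVec η b (∅ : Finset (Fin n)) F = {fun _ => false} := by
    ext t
    simp only [SVec, Set.mem_setOf_eq, Finset.notMem_empty, Set.mem_singleton_iff]
    constructor
    · rintro ⟨hsupp, -⟩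
      funext i; exact hsupp i (by simp)
    · rintro rfl
      exact ⟨fun i _ => rfl, hF.choose, hF.choose_spec, fun i hi => absurd hi (by simp)⟩
  rw [this, Set.ncard_singleton]

lemma base_zero {s : Finset (Fin n)} {F : Set (EuclideanSpace ℝ (Fin d))} {m : ℕ}
    (hflat : IsFlatOfDim F m)
    (hemp : ∀ i ∈ s, F ∩ Hyp (η i) (b i) = ∅) :
    (SVec η b s F).ncard = 1 := by
  classical
  obtain ⟨v, S, -, hF⟩ := hflat
  have hvF : v ∈ F := by rw [hF, mem_vadd_coset]; simp
  have hne : ∀ i ∈ s, ∀ z ∈ F, fval η b i z ≠ 0 := by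
    intro i hi z hz h0
    have : z ∈ F ∩ Hyp (η i) (b i) := ⟨hz, h0⟩
    rw [hemp i hi] at this
    exact this
  have hconst : ∀ i ∈ s, ∀ z ∈ F, ∀ z' ∈ F, (0 < fval η b i z ↔ 0 < fval η b i z') := by
    intro i hi z hz z' hz'
    constructor
    · intro hp
      by_contra hnp
      have hlt : fval η b i z' < 0 := lt_of_le_of_ne (not_lt.1 hnp) (hne i hi z' hz')
      obtain ⟨w, hwF, hwj, -, -⟩ := crossing hF hz' hz hlt hp
      exact hne i hi w hwF hwj
    · intro hp
      by_contra hnp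
      have hlt : fval η b i z < 0 := lt_of_le_of_ne (not_lt.1 hnp) (hne i hi z hz)
      obtain ⟨w, hwF, hwj, -, -⟩ := crossing hF hz hz' hlt hp
      exact hne i hi w hwF hwj
  set t0 : Fin n → Bool := fun i => if i ∈ s then decide (0 < fval η b i v) else false with ht0
  have : SVec η b s F = {t0} := by
    ext t
    simp only [Set.mem_singleton_iff]
    constructor
    · rintro ⟨hsupp, z, hzF, hsc⟩
      funext i
      by_cases hi : i ∈ s
      · have hsci := hsc i hi
        unfold SC at hsci
        rw [ht0]
        simp only [hi, if_true]
        rcases Bool.eq_false_or_eq_true (t i) with h | h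
        · rw [h] at hsci ⊢
          simp only [if_true] at hsci
          have : 0 < fval η b i v := (hconst i hi z hzF v hvF).1 hsci
          simp [this]
        · rw [h] at hsci ⊢
          simp only [Bool.false_eq_true, if_false] at hsci
          have : ¬ (0 < fval η b i v) := by
            intro hp
            have := (hconst i hi v hvF z hzF).1 hp
            linarith
          simp [this]
      · rw [hsupp i hi, ht0]; simp [hi]
    · rintro rfl
      refine ⟨fun i hi => by rw [ht0]; simp [hi], v, hvF, fun i hi => ?_⟩
      unfold SC
      rw [ht0]
      simp only [hi, if_true]
      by_cases hp : 0 < fval η b i v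
      · simp [hp]
      · have : fval η b i v < 0 := lt_of_le_of_ne (not_lt.1 hp) (hne i hi v hvF)
        simp [this, not_lt.2 this.le]
  rw [this, Set.ncard_singleton]

lemma sum_choose_succ (k : ℕ) : ∀ e : ℕ,
    ∑ i ∈ range (e + 2), (k + 1).choose i
      = ∑ i ∈ range (e + 2), k.choose i + ∑ i ∈ range (e + 1), k.choose i := by
  intro e
  induction e with
  | zero => simp [Finset.sum_range_succ, Nat.choose]; omega
  | succ e ih =>
      rw [Finset.sum_range_succ (n := e + 2), Finset.sum_range_succ (n := e + 2) (f := k.choose),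
        Finset.sum_range_succ (n := e + 1) (f := k.choose), ih]
      have h2 : (k + 1).choose (e + 2) = k.choose (e + 1) + k.choose (e + 2) :=
        Nat.choose_succ_succ k (e + 1)
      rw [h2]
      simp only [Finset.sum_range_succ]
      omega

lemma exists_transversal {F : Set (EuclideanSpace ℝ (Fin d))} {v : EuclideanSpace ℝ (Fin d)}
    {S : Submodule ℝ (EuclideanSpace ℝ (Fin d))} {m : ℕ}
    (hSm : Module.finrank ℝ S = m)
    (hF : F = v +ᵥ (S : Set (EuclideanSpace ℝ (Fin d))))
    {j : Fin n} (hflat' : IsFlatOfDim (F ∩ Hyp (η j) (b j)) (m - 1)) (hm : 1 ≤ m) :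
    ∃ u ∈ S, ⟪η j, u⟫ ≠ 0 := by
  by_contra hcon
  push_neg at hcon
  have hconst : ∀ z ∈ F, fval η b j z = fval η b j v := by
    intro z hz
    rw [hF, mem_vadd_coset] at hz
    have h1 := fval_line (η := η) (b := b) j v (z - v) 1
    have h2 : v + (1:ℝ) • (z - v) = z := by
      rw [one_smul]; abel
    rw [h2] at h1
    rw [h1, hcon _ hz, mul_zero, add_zero]
  obtain ⟨w, hwF, hwH⟩ := flat_nonempty hflat'
  have hv0 : fval η b j v = 0 := by rw [← hconst w hwF]; exact hwH
  have hFsub : F ∩ Hyp (η j) (b j) = F := by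
    apply Set.Subset.antisymm Set.inter_subset_left
    intro z hz
    exact ⟨hz, by rw [mem_hyp_iff, hconst z hz, hv0]⟩
  have : m = m - 1 := flat_dim_unique ⟨v, S, hSm, hF⟩ (hFsub ▸ hflat')
  omega

lemma main_count : ∀ (N : ℕ) (s : Finset (Fin n)), s.card = N →
    ∀ (F : Set (EuclideanSpace ℝ (Fin d))) (m d'' : ℕ), d'' ≤ m → IsFlatOfDim F m →
    (∀ T ⊆ s, T.Nonempty → T.card ≤ d'' →
      IsFlatOfDim (F ∩ ⋂ i ∈ T, Hyp (η i) (b i)) (m - T.card)) →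
    (∀ T ⊆ s, d'' < T.card → F ∩ ⋂ i ∈ T, Hyp (η i) (b i) = ∅) →
    (SVec η b s F).ncard = ∑ i ∈ range (d'' + 1), s.card.choose i := by
  intro N
  induction N with
  | zero =>
      intro s hs F m d'' _ hflat _ _
      rw [Finset.card_eq_zero.mp hs]
      rw [base_empty (flat_nonempty hflat)]
      rw [Finset.card_empty]
      rw [Finset.sum_eq_single_of_mem 0 (Finset.mem_range.2 (Nat.succ_pos _))]
      · simp
      · intro i _ hi
        exact Nat.choose_eq_zero_of_lt (Nat.pos_of_ne_zero hi)
  | succ N ih =>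
      intro s hs F m d'' hdm hflat hyp2 hyp3
      classical
      rcases Nat.eq_zero_or_pos d'' with hd0 | hdpos
      · subst hd0
        have hemp : ∀ i ∈ s, F ∩ Hyp (η i) (b i) = ∅ := by
          intro i hi
          have := hyp3 {i} (by simpa using hi) (by simp)
          simpa using this
        rw [base_zero hflat hemp]
        simp
      · -- d'' = e + 1
        obtain ⟨e, rfl⟩ : ∃ e, d'' = e + 1 := ⟨d'' - 1, by omega⟩
        have hsne : s.Nonempty := by
          rw [← Finset.card_pos, hs]; exact Nat.succ_pos N
        obtain ⟨j, hj⟩ := hsne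
        obtain ⟨v, S, hSm, hF⟩ := hflat
        set s' := s.erase j with hs'def
        set F' := F ∩ Hyp (η j) (b j) with hF'def
        have hs'card : s'.card = N := by
          rw [hs'def, Finset.card_erase_of_mem hj, hs]; rfl
        have hflatF' : IsFlatOfDim F' (m - 1) := by
          have := hyp2 {j} (by simpa using hj) (Finset.singleton_nonempty j) (by simp)
          simpa [hF'def] using this
        have hm1 : 1 ≤ m := le_trans (Nat.succ_le_succ (Nat.zero_le e)) hdm
        obtain ⟨u, huS, hcu⟩ := exists_transversal hSm hF hflatF' hm1
        rw [step_count hF hj huS hcu]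
        -- apply IH to (s', F, d''), and to (s', F', d''-1)
        have ih1 := ih s' hs'card F m (e + 1) hdm ⟨v, S, hSm, hF⟩
          (fun T hT => hyp2 T (hT.trans (Finset.erase_subset j s)))
          (fun T hT => hyp3 T (hT.trans (Finset.erase_subset j s)))
        have ih2 : (SVec η b s' F').ncard = ∑ i ∈ range (e + 1), N.choose i := by
          have := ih s' hs'card F' (m - 1) e (by omega) hflatF'
            (?_ : ∀ T ⊆ s', T.Nonempty → T.card ≤ e →
              IsFlatOfDim (F' ∩ ⋂ i ∈ T, Hyp (η i) (b i)) (m - 1 - T.card))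
            (?_ : ∀ T ⊆ s', e < T.card → F' ∩ ⋂ i ∈ T, Hyp (η i) (b i) = ∅)
          · rw [this, hs'card]
          · intro T hT hTne hTcard
            have hjT : j ∉ T := fun h => (Finset.notMem_erase j s) (hT h)
            have hins : F' ∩ ⋂ i ∈ T, Hyp (η i) (b i)
                = F ∩ ⋂ i ∈ insert j T, Hyp (η i) (b i) := by
              rw [Finset.set_biInter_insert, hF'def, Set.inter_assoc]
            rw [hins]
            have hsub : insert j T ⊆ s :=
              Finset.insert_subset hj (hT.trans (Finset.erase_subset j s))
            have hcard : (insert j T).card = T.card + 1 := Finset.card_insert_of_notMem hjT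
            have := hyp2 (insert j T) hsub (Finset.insert_nonempty j T)
              (by rw [hcard]; omega)
            rw [hcard] at this
            have harith : m - (T.card + 1) = m - 1 - T.card := by omega
            rwa [harith] at this
          · intro T hT hTcard
            have hjT : j ∉ T := fun h => (Finset.notMem_erase j s) (hT h)
            have hins : F' ∩ ⋂ i ∈ T, Hyp (η i) (b i)
                = F ∩ ⋂ i ∈ insert j T, Hyp (η i) (b i) := by
              rw [Finset.set_biInter_insert, hF'def, Set.inter_assoc]
            rw [hins]
            have hsub : insert j T ⊆ s :=
              Finset.insert_subset hj (hT.trans (Finset.erase_subset j s))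
            exact hyp3 (insert j T) hsub
              (by rw [Finset.card_insert_of_notMem hjT]; omega)
        rw [ih1, ih2, hs'card, hs]
        exact (sum_choose_succ N e).symm

variable (η b) in
def opencell (t : Fin n → Bool) : Set (EuclideanSpace ℝ (Fin d)) := {z | ∀ i, SC η b t i z}

variable (η b) in
def tvec (z : EuclideanSpace ℝ (Fin d)) : Fin n → Bool := fun i => decide (0 < fval η b i z)

lemma mem_compl_union_iff {z : EuclideanSpace ℝ (Fin d)} :
    z ∈ (⋃ i, Hyp (η i) (b i))ᶜ ↔ ∀ i, fval η b i z ≠ 0 := by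
  simp only [Set.mem_compl_iff, Set.mem_iUnion, not_exists]
  exact forall_congr' fun i => by rw [mem_hyp_iff]

lemma opencell_subset_compl (t : Fin n → Bool) :
    opencell η b t ⊆ (⋃ i, Hyp (η i) (b i))ᶜ := by
  intro z hz
  rw [mem_compl_union_iff]
  exact fun i => sc_ne_zero (hz i)

lemma mem_opencell_tvec {z : EuclideanSpace ℝ (Fin d)}
    (hz : z ∈ (⋃ i, Hyp (η i) (b i))ᶜ) : z ∈ opencell η b (tvec η b z) := by
  rw [mem_compl_union_iff] at hz
  intro i
  unfold SC tvec
  by_cases hp : 0 < fval η b i z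
  · simp [hp]
  · have : fval η b i z < 0 := lt_of_le_of_ne (not_lt.1 hp) (hz i)
    simp [this, not_lt.2 this.le]

lemma opencell_open (t : Fin n → Bool) : IsOpen (opencell η b t) := by
  have : opencell η b t = ⋂ i, {z | SC η b t i z} := by
    ext z; simp [opencell, Set.mem_iInter]
  rw [this]
  exact isOpen_iInter_of_finite fun i => sc_open t i

lemma opencell_convex (t : Fin n → Bool) : Convex ℝ (opencell η b t) := by
  intro x hx y hy a c ha hc hac
  intro i
  have hx' := hx i
  have hy' := hy i
  unfold SC at hx' hy' ⊢
  have hcombo := fval_combo (η := η) (b := b) i x y a c hac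
  rcases eq_or_lt_of_le ha with rfl0 | ha'
  · have hc1 : c = 1 := by linarith
    have ha0 : a = 0 := rfl0.symm
    rw [hcombo, ha0, hc1]
    simpa using hy'
  · rcases Bool.eq_false_or_eq_true (t i) with hti | hti <;> rw [hti] at hx' hy' ⊢ <;>
      simp only [if_true, Bool.false_eq_true, if_false] at hx' hy' ⊢ <;> rw [hcombo] <;>
        nlinarith

lemma opencell_eq_of_mem {t t' : Fin n → Bool} {z : EuclideanSpace ℝ (Fin d)}
    (h : z ∈ opencell η b t) (h' : z ∈ opencell η b t') : t = t' := by
  funext i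
  have h1 := h i
  have h2 := h' i
  unfold SC at h1 h2
  rcases Bool.eq_false_or_eq_true (t i) with ht | ht <;>
    rcases Bool.eq_false_or_eq_true (t' i) with ht' | ht' <;>
      rw [ht, ht'] <;> rw [ht] at h1 <;> rw [ht'] at h2 <;>
        simp only [if_true, Bool.false_eq_true, if_false] at h1 h2 <;> first
          | rfl
          | linarith

lemma component_eq {z : EuclideanSpace ℝ (Fin d)}
    (hz : z ∈ (⋃ i, Hyp (η i) (b i))ᶜ) :
    connectedComponentIn (⋃ i, Hyp (η i) (b i))ᶜ z = opencell η b (tvec η b z) := by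
  set K := (⋃ i, Hyp (η i) (b i))ᶜ with hK
  set t := tvec η b z with ht
  have hmem : z ∈ opencell η b t := mem_opencell_tvec hz
  apply Set.Subset.antisymm
  · -- component ⊆ cell, via clopen-type argument
    set B := ⋃ t' ∈ {t' : Fin n → Bool | t' ≠ t}, opencell η b t' with hB
    have hBopen : IsOpen B := isOpen_biUnion fun t' _ => opencell_open t'
    have hdisj : Disjoint (opencell η b t) B := by
      rw [Set.disjoint_left]
      rintro w hw hwB
      rw [hB] at hwB
      simp only [Set.mem_iUnion, Set.mem_setOf_eq] at hwB
      obtain ⟨t', ht', hw'⟩ := hwB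
      exact ht' (opencell_eq_of_mem hw' hw)
    have hcover : K ⊆ opencell η b t ∪ B := by
      intro w hw
      by_cases hwt : tvec η b w = t
      · left; rw [← hwt]; exact mem_opencell_tvec hw
      · right
        rw [hB]
        simp only [Set.mem_iUnion, Set.mem_setOf_eq]
        exact ⟨tvec η b w, hwt, mem_opencell_tvec hw⟩
    exact isPreconnected_connectedComponentIn.subset_left_of_subset_union
      (opencell_open t) hBopen hdisj
      ((connectedComponentIn_subset K z).trans hcover)
      ⟨z, mem_connectedComponentIn hz, hmem⟩
  · exact ((opencell_convex t).isPreconnected).subset_connectedComponentIn hmem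
      (opencell_subset_compl t)

end RGP

theorem regions_relaxed_general_position' {d n d' : ℕ} (hd : d' ≤ d)
    (η : Fin n → EuclideanSpace ℝ (Fin d)) (b : Fin n → ℝ)
    (hH : (∀ T : Finset (Fin n), T.Nonempty → T.card ≤ d' →
        IsFlatOfDim (⋂ i ∈ T, Hyp (η i) (b i)) (d - T.card)) ∧
      (∀ T : Finset (Fin n), d' < T.card → (⋂ i ∈ T, Hyp (η i) (b i)) = ∅)) :
    {R : Set (EuclideanSpace ℝ (Fin d)) |
        ∃ u ∈ (⋃ i, Hyp (η i) (b i))ᶜ, R = connectedComponentIn (⋃ i, Hyp (η i) (b i))ᶜ u}.ncard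
      = ∑ i ∈ Finset.range (d' + 1), n.choose i := by
  classical
  open RGP in
  have hset : {R : Set (EuclideanSpace ℝ (Fin d)) |
        ∃ u ∈ (⋃ i, Hyp (η i) (b i))ᶜ, R = connectedComponentIn (⋃ i, Hyp (η i) (b i))ᶜ u}
      = opencell η b '' (SVec η b Finset.univ Set.univ) := by
    ext R
    simp only [Set.mem_setOf_eq, Set.mem_image]
    constructor
    · rintro ⟨u, hu, rfl⟩
      refine ⟨tvec η b u, ⟨fun i hi => absurd (Finset.mem_univ i) hi,
        u, Set.mem_univ u, fun i _ => mem_opencell_tvec hu i⟩, (component_eq hu).symm⟩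
    · rintro ⟨t, ⟨-, z, -, hsc⟩, rfl⟩
      have hz : z ∈ opencell η b t := fun i => hsc i (Finset.mem_univ i)
      have hzc : z ∈ (⋃ i, Hyp (η i) (b i))ᶜ := opencell_subset_compl t hz
      refine ⟨z, hzc, ?_⟩
      rw [component_eq hzc, opencell_eq_of_mem (mem_opencell_tvec hzc) hz]
  rw [hset]
  have hinj : Set.InjOn (RGP.opencell η b) (RGP.SVec η b Finset.univ Set.univ) := by
    rintro t ⟨-, z, -, hsc⟩ t' ht' heq
    have hz : z ∈ RGP.opencell η b t := fun i => hsc i (Finset.mem_univ i)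
    have hz' : z ∈ RGP.opencell η b t' := heq ▸ hz
    exact RGP.opencell_eq_of_mem hz hz'
  rw [Set.ncard_image_of_injOn hinj]
  have huniv : IsFlatOfDim (Set.univ : Set (EuclideanSpace ℝ (Fin d))) d := by
    refine ⟨0, ⊤, ?_, ?_⟩
    · rw [finrank_top]; exact finrank_euclideanSpace_fin
    · ext z
      rw [RGP.mem_vadd_coset]
      simp
  have := RGP.main_count (η := η) (b := b) (Fintype.card (Fin n)) Finset.univ
    (Finset.card_univ) Set.univ d d' hd huniv
    (fun T _ hne hcard => by rw [Set.univ_inter]; exact hH.1 T hne hcard)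
    (fun T _ hcard => by rw [Set.univ_inter]; exact hH.2 T hcard)
  rw [this, Finset.card_univ, Fintype.card_fin]


/-- If an arrangement of `n` hyperplanes in `ℝ^d` is in `d'`-relaxed general position
(`d' ≤ d`), then the number of regions (connected components of the complement of the
union of the hyperplanes) equals `∑_{i=0}^{d'} C(n, i)`. -/
theorem regions_relaxed_general_position {d n d' : ℕ} (hd : d' ≤ d)
    (η : Fin n → EuclideanSpace ℝ (Fin d)) (b : Fin n → ℝ)
    (hH : RelaxedGeneralPosition d' η b) :
    {R : Set (EuclideanSpace ℝ (Fin d)) |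
        ∃ u ∈ (⋃ i, Hyp (η i) (b i))ᶜ, R = connectedComponentIn (⋃ i, Hyp (η i) (b i))ᶜ u}.ncard
      = ∑ i ∈ Finset.range (d' + 1), n.choose i := by
  exact regions_relaxed_general_position' hd η b ⟨hH.2.1, hH.2.2⟩
end
end
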